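/- Let x⊗h and y⊗k be infinitesimal transvections with F·x = F·y and ker h ≠ ker k (or F·x ≠ F·y and ker h = ker k). Then the Lie subalgebra of gl(V) generated by x⊗h and y⊗k is two-dimensional. -/

import Mathlib

attribute [local instance 100] LieRing.ofAssociativeRing

/-- two infinitesimal transvections with equal centres and distinct axes
(or distinct centres and equal axes) generate a two-dimensional Lie algebra. -/
theorem transvection_pair_two_dimensional {F V : Type*} [Field F]
    [AddCommGroup V] [Module F V] [FiniteDimensional F V]
    (h2 : (2 : F) ≠ 0) (x y : V) (h k : Module.Dual F V)
    (hx : x ≠ 0) (hy : y ≠ 0) (hh : h ≠ 0) (hk : k ≠ 0)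
    (hhx : h x = 0) (hky : k y = 0)
    (hconf : ((Submodule.span F {x} : Submodule F V) = Submodule.span F {y} ∧
        LinearMap.ker h ≠ LinearMap.ker k) ∨
      ((Submodule.span F {x} : Submodule F V) ≠ Submodule.span F {y} ∧
        LinearMap.ker h = LinearMap.ker k)) :
    Module.finrank F
      (LieSubalgebra.lieSpan F (Module.End F V) {h.smulRight x, k.smulRight y}) = 2 := by
  set A : Module.End F V := h.smulRight x with hA
  set B : Module.End F V := k.smulRight y with hB
  -- In both configurations, h y = 0 and k x = 0.
  have key : h y = 0 ∧ k x = 0 := by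
    rcases hconf with ⟨hs, _⟩ | ⟨_, hker⟩
    · obtain ⟨c, hc⟩ := Submodule.mem_span_singleton.1
        (hs ▸ Submodule.mem_span_singleton_self y)
      obtain ⟨d, hd⟩ := Submodule.mem_span_singleton.1
        (hs.symm ▸ Submodule.mem_span_singleton_self x)
      constructor
      · rw [← hc, map_smul, hhx, smul_zero]
      · rw [← hd, map_smul, hky, smul_zero]
    · constructor
      · have : y ∈ LinearMap.ker k := hky
        rw [← hker] at this; exact this
      · have : x ∈ LinearMap.ker h := hhx
        rw [hker] at this; exact this
  -- A and B commute.
  have hAB : ⁅A, B⁆ = 0 := by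
    ext v
    simp [hA, hB, Ring.lie_def, Module.End.mul_apply, key.1, key.2, smul_smul]
  have hBA : ⁅B, A⁆ = 0 := by rw [← lie_skew, hAB, neg_zero]
  -- A and B are linearly independent.
  have hind : ∀ a b : F, a • A + b • B = 0 → a = 0 ∧ b = 0 := by
    intro a b hab
    have hv : ∀ v : V, (a * h v) • x + (b * k v) • y = 0 := by
      intro v
      have := LinearMap.congr_fun hab v
      simpa [hA, hB, mul_smul] using this
    rcases hconf with ⟨hs, hker⟩ | ⟨hs, hker⟩
    · -- y = c • x with c ≠ 0; h and k not proportional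
      obtain ⟨c, hc⟩ := Submodule.mem_span_singleton.1
        (hs ▸ Submodule.mem_span_singleton_self y)
      have hc0 : c ≠ 0 := by rintro rfl; simp at hc; exact hy hc.symm
      have hfun : a • h + (b * c) • k = 0 := by
        ext v
        have := hv v
        rw [← hc] at this
        have hx' : (a * h v + b * c * k v) • x = 0 := by
          rw [add_smul]; rw [smul_smul] at this; convert this using 2; ring
        have := (smul_eq_zero.1 hx').resolve_right hx
        simpa [mul_comm, mul_assoc, mul_left_comm] using this
      by_cases ha : a = 0
      · subst ha
        simp only [zero_smul, zero_add] at hfun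
        rcases smul_eq_zero.1 hfun with hbc | hk0
        · exact ⟨rfl, (mul_eq_zero.1 hbc).resolve_right hc0⟩
        · exact absurd hk0 hk
      · exfalso
        have hbc : b * c ≠ 0 := by
          rintro hbc
          rw [hbc, zero_smul, add_zero] at hfun
          exact hh ((smul_eq_zero.1 hfun).resolve_left ha)
        have hhk : a • h = (-(b * c)) • k := by
          linear_combination (norm := module) hfun
        apply hker
        rw [← LinearMap.ker_smul h a ha, hhk,
          LinearMap.ker_smul k _ (neg_ne_zero.2 hbc)]
    · -- x, y independent; ker h = ker k
      obtain ⟨v, hv0⟩ : ∃ v, h v ≠ 0 := by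
        by_contra hcon
        push_neg at hcon
        exact hh (LinearMap.ext fun v => hcon v)
      have hkv : k v ≠ 0 := by
        intro hkv
        exact hv0 (by have : v ∈ LinearMap.ker k := hkv; rw [← hker] at this; exact this)
      have hxy : ∀ p q : F, p • x + q • y = 0 → p = 0 ∧ q = 0 := by
        intro p q hpq
        by_cases hp : p = 0
        · subst hp
          simp only [zero_smul, zero_add] at hpq
          exact ⟨rfl, (smul_eq_zero.1 hpq).resolve_right hy⟩
        · exfalso
          apply hs
          have hpx : p • x = (-q) • y := by
            linear_combination (norm := module) hpq
          have hxq : x = (p⁻¹ * -q) • y := by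
            rw [mul_smul, ← hpx, inv_smul_smul₀ hp]
          have hq0 : p⁻¹ * -q ≠ 0 := by
            intro h0
            rw [h0, zero_smul] at hxq
            exact hx hxq
          rw [hxq, Submodule.span_singleton_smul_eq (IsUnit.mk0 _ hq0)]
      obtain ⟨h1, h2'⟩ := hxy _ _ (hv v)
      exact ⟨(mul_eq_zero.1 h1).resolve_right hv0, (mul_eq_zero.1 h2').resolve_right hkv⟩
  -- The linear span of {A, B} is a Lie subalgebra.
  have hcomm : ∀ u ∈ Submodule.span F ({A, B} : Set (Module.End F V)),
      ∀ w ∈ Submodule.span F ({A, B} : Set (Module.End F V)), ⁅u, w⁆ = 0 := by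
    intro u hu w hw
    obtain ⟨m, n, hmn⟩ := Submodule.mem_span_pair.1 hu
    obtain ⟨p, q, hpq⟩ := Submodule.mem_span_pair.1 hw
    rw [← hmn, ← hpq]
    simp [lie_add, add_lie, lie_smul, smul_lie, hAB, hBA]
  let K : LieSubalgebra F (Module.End F V) :=
    { Submodule.span F ({A, B} : Set (Module.End F V)) with
      lie_mem' := fun hu hw => by
        rw [hcomm _ hu _ hw]; exact Submodule.zero_mem _ }
  have hKle : LieSubalgebra.lieSpan F (Module.End F V) {A, B} = K := by
    apply le_antisymm
    · exact LieSubalgebra.lieSpan_le.2 (Submodule.subset_span)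
    · intro z hz
      exact Submodule.span_le.2 (LieSubalgebra.subset_lieSpan) hz
  rw [hKle]
  have hrange : Set.range ![A, B] = {A, B} := by
    ext z
    simp only [Set.mem_range, Fin.exists_fin_two, Matrix.cons_val_zero,
      Matrix.cons_val_one, Matrix.head_cons, Set.mem_insert_iff, Set.mem_singleton_iff]
    tauto
  have hli : LinearIndependent F ![A, B] := LinearIndependent.pair_iff.2 hind
  have := finrank_span_eq_card (R := F) hli
  rw [hrange] at this
  have h' : Module.finrank F (Submodule.span F ({A, B} : Set (Module.End F V))) = 2 := by
    simpa [Fintype.card_fin] using this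
  exact h'
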